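/- Let α be any formula of the first-order language of arithmetic (with predicate symbols = and <) that is valid in every nonempty structure, and let ψ^12 be the formula ∧x1∧x2[x1 < x2 ≡ ∨x3(x1 + x3 = x2)]. Then i(ψ^12 → α) ∈ T_D, i.e. the propositional formula (s ≡ p) → i(α) is valid in the matrix 𝔐_D. -/

import Mathlib

/-- Propositional formulas built from propositional variables (indexed by `ℕ`)
using →, ∼, ∨, ∧, ≡. -/
inductive PropForm : Type
  | var : ℕ → PropForm
  | neg : PropForm → PropForm
  | imp : PropForm → PropForm → PropForm
  | disj : PropForm → PropForm → PropForm
  | conj : PropForm → PropForm → PropForm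
  | equiv : PropForm → PropForm → PropForm

/-- The implication table of the matrix 𝔐_D. -/
def fimp : Fin 3 → Fin 3 → Fin 3 := ![![1, 1, 1], ![0, 1, 0], ![0, 1, 2]]
/-- The negation table of the matrix 𝔐_D. -/
def fneg : Fin 3 → Fin 3 := ![1, 0, 2]
/-- The disjunction table of the matrix 𝔐_D. -/
def fdisj : Fin 3 → Fin 3 → Fin 3 := ![![0, 1, 0], ![1, 1, 1], ![0, 1, 2]]
/-- The conjunction table of the matrix 𝔐_D. -/
def fconj : Fin 3 → Fin 3 → Fin 3 := ![![0, 0, 0], ![0, 1, 1], ![0, 1, 2]]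
/-- The equivalence table of the matrix 𝔐_D. -/
def fequiv : Fin 3 → Fin 3 → Fin 3 := ![![1, 0, 0], ![0, 1, 0], ![0, 0, 2]]

/-- Value of a propositional formula in the matrix 𝔐_D under a valuation `v`. -/
def evalD (v : ℕ → Fin 3) : PropForm → Fin 3
  | .var n => v n
  | .neg φ => fneg (evalD v φ)
  | .imp φ ψ => fimp (evalD v φ) (evalD v ψ)
  | .disj φ ψ => fdisj (evalD v φ) (evalD v ψ)
  | .conj φ ψ => fconj (evalD v φ) (evalD v ψ)
  | .equiv φ ψ => fequiv (evalD v φ) (evalD v ψ)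

/-- T_D : the set of propositional formulas valid in 𝔐_D
(every valuation gives a designated value, i.e. 1 or 2). -/
def TD : Set PropForm := {φ | ∀ v : ℕ → Fin 3, evalD v φ = 1 ∨ evalD v φ = 2}
/-- Terms of the first-order language of arithmetic: individual variables, the
constant 1, and the binary function symbols + and ·. -/
inductive ATm : Type
  | var : ℕ → ATm
  | one : ATm
  | add : ATm → ATm → ATm
  | mul : ATm → ATm → ATm

/-- S_A : formulas of the first-order language of arithmetic, with binary predicate
symbols = and <, built using →, ∼, ∨, ∧, ≡ and quantifiers. -/
inductive AFm : Type
  | eq : ATm → ATm → AFm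
  | lt : ATm → ATm → AFm
  | neg : AFm → AFm
  | imp : AFm → AFm → AFm
  | disj : AFm → AFm → AFm
  | conj : AFm → AFm → AFm
  | equiv : AFm → AFm → AFm
  | all : ℕ → AFm → AFm
  | ex : ℕ → AFm → AFm

/-- A (nonempty) structure for the language of arithmetic: the predicate symbols
= and < and the symbols 1, +, · are interpreted arbitrarily. -/
structure AStr : Type 1 where
  M : Type
  ne : Nonempty M
  one : M
  add : M → M → M
  mul : M → M → M
  eqI : M → M → Prop
  ltI : M → M → Prop

/-- Value of an arithmetic term in a structure under an assignment. -/
def ATm.eval (S : AStr) (v : ℕ → S.M) : ATm → S.M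
  | .var x => v x
  | .one => S.one
  | .add t u => S.add (t.eval S v) (u.eval S v)
  | .mul t u => S.mul (t.eval S v) (u.eval S v)

/-- Satisfaction of an arithmetic formula in a structure under an assignment. -/
def ASat (S : AStr) (v : ℕ → S.M) : AFm → Prop
  | .eq t u => S.eqI (t.eval S v) (u.eval S v)
  | .lt t u => S.ltI (t.eval S v) (u.eval S v)
  | .neg φ => ¬ ASat S v φ
  | .imp φ ψ => ASat S v φ → ASat S v ψ
  | .disj φ ψ => ASat S v φ ∨ ASat S v ψ
  | .conj φ ψ => ASat S v φ ∧ ASat S v ψ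
  | .equiv φ ψ => (ASat S v φ ↔ ASat S v ψ)
  | .all x φ => ∀ a : S.M, ASat S (Function.update v x a) φ
  | .ex x φ => ∃ a : S.M, ASat S (Function.update v x a) φ

/-- L_2^r : the set of formulas of S_A valid in every nonempty structure
(the logical axioms of the arithmetic system). -/
def AL2 : Set AFm := {φ | ∀ (S : AStr) (v : ℕ → S.M), ASat S v φ}

/-- The map i : S_A → S_0 collapsing every equality atom to the propositional
variable `p`, every order atom to the propositional variable `s`, commuting with
all connectives and erasing quantifiers. -/
def imap (p s : ℕ) : AFm → PropForm
  | .eq _ _ => .var p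
  | .lt _ _ => .var s
  | .neg φ => .neg (imap p s φ)
  | .imp φ ψ => .imp (imap p s φ) (imap p s ψ)
  | .disj φ ψ => .disj (imap p s φ) (imap p s ψ)
  | .conj φ ψ => .conj (imap p s φ) (imap p s ψ)
  | .equiv φ ψ => .equiv (imap p s φ) (imap p s ψ)
  | .all _ φ => imap p s φ
  | .ex _ φ => imap p s φ
/-- ψ^12 : the formula ∧x1∧x2[x1 < x2 ≡ ∨x3(x1 + x3 = x2)]. -/
def psi12 : AFm :=
  .all 1 (.all 2 (.equiv (.lt (.var 1) (.var 2))
    (.ex 3 (.eq (.add (.var 1) (.var 3)) (.var 2)))))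

/-- for every formula α of the language of arithmetic valid in every
nonempty structure, i(ψ^12 → α) ∈ T_D, i.e. the propositional formula
(s ≡ p) → i(α) is valid in the matrix 𝔐_D (where p and s are two fixed distinct
propositional variables). -/
lemma eval_two (p s : ℕ) (v : ℕ → Fin 3) (hp : v p = 2) (hs : v s = 2) :
    ∀ φ : AFm, evalD v (imap p s φ) = 2 := by
  intro φ
  induction φ with
  | eq t u => simpa [imap, evalD] using hp
  | lt t u => simpa [imap, evalD] using hs
  | neg φ ih => simp [imap, evalD, ih]; rfl
  | imp φ ψ ih1 ih2 => simp [imap, evalD, ih1, ih2]; rfl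
  | disj φ ψ ih1 ih2 => simp [imap, evalD, ih1, ih2]; rfl
  | conj φ ψ ih1 ih2 => simp [imap, evalD, ih1, ih2]; rfl
  | equiv φ ψ ih1 ih2 => simp [imap, evalD, ih1, ih2]; rfl
  | all x φ ih => simpa [imap, evalD] using ih
  | ex x φ ih => simpa [imap, evalD] using ih

/-- A one-element structure with prescribed truth values of the predicates. -/
def Sb (b c : Prop) : AStr :=
  ⟨PUnit, ⟨⟨⟩⟩, ⟨⟩, fun _ _ => ⟨⟩, fun _ _ => ⟨⟩, fun _ _ => b, fun _ _ => c⟩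

lemma eval_bool (p s : ℕ) (v : ℕ → Fin 3)
    (hp : v p = 0 ∨ v p = 1) (hs : v s = 0 ∨ v s = 1) :
    ∀ (φ : AFm) (w : ℕ → (Sb (v p = 1) (v s = 1)).M),
      (ASat (Sb (v p = 1) (v s = 1)) w φ ↔ evalD v (imap p s φ) = 1) ∧
      (evalD v (imap p s φ) = 0 ∨ evalD v (imap p s φ) = 1) := by
  intro φ
  induction φ with
  | eq t u => intro w; exact ⟨Iff.rfl, hp⟩
  | lt t u => intro w; exact ⟨Iff.rfl, hs⟩
  | neg φ ih =>
    intro w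
    obtain ⟨h1, h2⟩ := ih w
    rcases h2 with h | h <;>
      simp [ASat, imap, evalD, h1, h] <;> constructor <;> decide
  | imp φ ψ ih1 ih2 =>
    intro w
    obtain ⟨ha1, ha2⟩ := ih1 w
    obtain ⟨hb1, hb2⟩ := ih2 w
    rcases ha2 with h | h <;> rcases hb2 with h' | h' <;>
      simp [ASat, imap, evalD, ha1, hb1, h, h'] <;>
      first | (constructor <;> decide) | decide
  | disj φ ψ ih1 ih2 =>
    intro w
    obtain ⟨ha1, ha2⟩ := ih1 w
    obtain ⟨hb1, hb2⟩ := ih2 w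
    rcases ha2 with h | h <;> rcases hb2 with h' | h' <;>
      simp [ASat, imap, evalD, ha1, hb1, h, h'] <;>
      first | (constructor <;> decide) | decide
  | conj φ ψ ih1 ih2 =>
    intro w
    obtain ⟨ha1, ha2⟩ := ih1 w
    obtain ⟨hb1, hb2⟩ := ih2 w
    rcases ha2 with h | h <;> rcases hb2 with h' | h' <;>
      simp [ASat, imap, evalD, ha1, hb1, h, h'] <;>
      first | (constructor <;> decide) | decide
  | equiv φ ψ ih1 ih2 =>
    intro w
    obtain ⟨ha1, ha2⟩ := ih1 w
    obtain ⟨hb1, hb2⟩ := ih2 w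
    rcases ha2 with h | h <;> rcases hb2 with h' | h' <;>
      simp [ASat, imap, evalD, ha1, hb1, h, h'] <;>
      first | (constructor <;> decide) | decide
  | all x φ ih =>
    intro w
    constructor
    · constructor
      · intro h; exact (ih _).1.mp (h ⟨⟩)
      · intro h a; exact (ih _).1.mpr h
    · exact (ih w).2
  | ex x φ ih =>
    intro w
    constructor
    · constructor
      · rintro ⟨a, h⟩; exact (ih _).1.mp h
      · intro h; exact ⟨⟨⟩, (ih _).1.mpr h⟩
    · exact (ih w).2

theorem imap_psi12_imp_mem_TD (p s : ℕ) (hps : p ≠ s)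
    (α : AFm) (hα : α ∈ AL2) :
    imap p s (.imp psi12 α) ∈ TD := by
  intro v
  have hant : imap p s psi12 = .equiv (.var s) (.var p) := rfl
  show evalD v (.imp (imap p s psi12) (imap p s α)) = 1 ∨ _ = 2
  rw [hant]
  have hp3 : v p = 0 ∨ v p = 1 ∨ v p = 2 := by omega
  have hs3 : v s = 0 ∨ v s = 1 ∨ v s = 2 := by omega
  -- helper for the two-valued cases
  have key : ∀ (hp : v p = 0 ∨ v p = 1) (hs : v s = 0 ∨ v s = 1),
      evalD v (imap p s α) = 1 := fun hp hs =>
    (eval_bool p s v hp hs α (fun _ => ⟨⟩)).1.mp (hα (Sb (v p = 1) (v s = 1)) _)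
  have h0 : ∀ x : Fin 3, fimp 0 x = 1 := by decide
  rcases hp3 with hp | hp | hp <;> rcases hs3 with hs | hs | hs
  · have h := key (Or.inl hp) (Or.inl hs)
    simp [evalD, hp, hs, h]; left; decide
  · have h := key (Or.inl hp) (Or.inr hs)
    simp [evalD, hp, hs, h]; left; decide
  · simp only [evalD, hp, hs]; left; exact h0 _
  · have h := key (Or.inr hp) (Or.inl hs)
    simp [evalD, hp, hs, h]; left; decide
  · have h := key (Or.inr hp) (Or.inr hs)
    simp [evalD, hp, hs, h]; left; decide
  · simp only [evalD, hp, hs]; left; exact h0 _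
  · simp only [evalD, hp, hs]; left; exact h0 _
  · simp only [evalD, hp, hs]; left; exact h0 _
  · have h := eval_two p s v hp hs α
    simp [evalD, hp, hs, h]; right
    rw [show imap p s (psi12.imp α) = .imp (.equiv (.var s) (.var p)) (imap p s α) from rfl]
    simp only [evalD, hp, hs, h]; decide
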